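/- Let K = Q(√D) with D > 1 squarefree, and let α ∈ O_K be totally positive and indecomposable. Then there exists a totally positive element δ of the codifferent O_K^∨ with Tr(αδ) = 1. -/

import Mathlib

set_option maxHeartbeats 2000000 in
open NumberField in
theorem quadratic_indecomposable_has_trace_one (K : Type*) [Field K] [NumberField K]
    (hdeg : Module.finrank ℚ K = 2)
    (htotreal : ∀ v : InfinitePlace K, v.IsReal)
    (α : K) (hαint : IsIntegral ℤ α) (hαpos : ∀ φ : K →+* ℝ, 0 < φ α)
    (hind : ¬ ∃ β γ : K, IsIntegral ℤ β ∧ IsIntegral ℤ γ ∧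
      (∀ φ : K →+* ℝ, 0 < φ β) ∧ (∀ φ : K →+* ℝ, 0 < φ γ) ∧ α = β + γ) :
    ∃ δ : K,
      (∀ β : K, IsIntegral ℤ β → ∃ t : ℤ, Algebra.trace ℚ K (δ * β) = t) ∧
      (∀ φ : K →+* ℝ, 0 < φ δ) ∧
      Algebra.trace ℚ K (α * δ) = 1 := by
  classical
  -- ## Step 1: the two real embeddings and the trace formula
  obtain ⟨ψ1, ψ2, hallψ, htrψ⟩ :
      ∃ σ1 σ2 : K →+* ℝ, (∀ φ : K →+* ℝ, φ = σ1 ∨ φ = σ2) ∧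
        ∀ x : K, ((Algebra.trace ℚ K x : ℚ) : ℝ) = σ1 x + σ2 x := by
    have hcard : (Finset.univ : Finset (K →+* ℂ)).card = 2 := by
      rw [Finset.card_univ, NumberField.Embeddings.card K ℂ, hdeg]
    obtain ⟨φ1, φ2, hφne, hφuniv⟩ := Finset.card_eq_two.mp hcard
    have hreal : ∀ φ : K →+* ℂ, ComplexEmbedding.IsReal φ := fun φ =>
      (NumberField.InfinitePlace.isReal_mk_iff).mp (htotreal _)
    have hcomp : ∀ (φ : K →+* ℂ) (x : K),
        (((hreal φ).embedding x : ℝ) : ℂ) = φ x := fun φ x =>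
      ComplexEmbedding.IsReal.coe_embedding_apply (hreal φ) x
    refine ⟨(hreal φ1).embedding, (hreal φ2).embedding, ?_, ?_⟩
    · intro φ
      have hmem : (Complex.ofRealHom.comp φ) ∈ ({φ1, φ2} : Finset (K →+* ℂ)) := by
        rw [← hφuniv]; exact Finset.mem_univ _
      have key : ∀ ψ : K →+* ℂ, Complex.ofRealHom.comp φ = ψ → φ = (hreal ψ).embedding := by
        intro ψ h
        ext x
        have h1 : (φ x : ℂ) = ψ x := by
          have := congrArg (fun f : K →+* ℂ => f x) h
          simpa using this
        have h2 := hcomp ψ x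
        exact_mod_cast h1.trans h2.symm
      rcases Finset.mem_insert.mp hmem with h | h
      · exact Or.inl (key φ1 h)
      · exact Or.inr (key φ2 (Finset.mem_singleton.mp h))
    · intro x
      have htr := trace_eq_sum_embeddings (K := ℚ) (L := K) ℂ (x := x)
      have hsum : (∑ σ : K →ₐ[ℚ] ℂ, σ x) = ∑ φ : K →+* ℂ, φ x := by
        rw [← Equiv.sum_comp (RingHom.equivRatAlgHom K ℂ) (fun σ : K →ₐ[ℚ] ℂ => σ x)]
        rfl
      rw [hsum] at htr
      have hsum2 : (∑ φ : K →+* ℂ, φ x) = φ1 x + φ2 x := by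
        rw [hφuniv, Finset.sum_pair hφne]
      rw [hsum2, ← hcomp φ1 x, ← hcomp φ2 x] at htr
      have : ((((Algebra.trace ℚ K) x : ℚ) : ℝ) : ℂ) =
          ((((hreal φ1).embedding x + (hreal φ2).embedding x : ℝ)) : ℂ) := by
        rw [Complex.ofReal_add]
        rw [← htr]
        norm_cast
      exact_mod_cast this
  -- ring homs are ℚ-linear
  have hφsmul : ∀ (φ : K →+* ℝ) (q : ℚ) (x : K), φ (q • x) = (q : ℝ) * φ x := by
    intro φ q x
    rw [Algebra.smul_def, map_mul]
    congr 1
    rw [eq_ratCast (algebraMap ℚ K) q, map_ratCast]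
  -- ## Step 2: integral basis and dual basis
  have hnd := traceForm_nondegenerate ℚ K
  have hcardι : Fintype.card (Module.Free.ChooseBasisIndex ℤ (𝓞 K)) = 2 := by
    rw [← Module.finrank_eq_card_chooseBasisIndex, RingOfIntegers.rank, hdeg]
  let e := Fintype.equivFinOfCardEq hcardι
  set Bq : Module.Basis (Fin 2) ℚ K := (NumberField.integralBasis K).reindex e with hBq
  set Bd : Module.Basis (Fin 2) ℚ K := (Algebra.traceForm ℚ K).dualBasis hnd Bq with hBd
  have hint : ∀ x : K, IsIntegral ℤ x → ∀ i : Fin 2, ∃ c : ℤ, Bq.repr x i = (c : ℚ) := by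
    intro x hx i
    obtain ⟨y, hy⟩ : ∃ y : 𝓞 K, algebraMap (𝓞 K) K y = x := ⟨⟨x, hx⟩, rfl⟩
    refine ⟨(RingOfIntegers.basis K).repr y (e.symm i), ?_⟩
    rw [hBq, Module.Basis.repr_reindex_apply, ← hy, integralBasis_repr_apply]
    rfl
  have hBqint : ∀ i : Fin 2, IsIntegral ℤ (Bq i) := by
    intro i
    rw [hBq, Module.Basis.reindex_apply, integralBasis_apply]
    exact RingOfIntegers.isIntegral_coe _
  have hcomb : ∀ (c d : ℤ), IsIntegral ℤ ((c : ℚ) • Bq 0 + (d : ℚ) • Bq 1) := by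
    intro c d
    have h : ∀ (c : ℤ) (i : Fin 2), IsIntegral ℤ ((c : ℚ) • Bq i) := by
      intro c i
      have : ((c : ℚ)) • Bq i = algebraMap ℤ K c * Bq i := by
        rw [Algebra.smul_def]
        norm_num
      rw [this]
      exact (isIntegral_algebraMap).mul (hBqint i)
    exact (h c 0).add (h d 1)
  have key : ∀ (p q : ℚ) (x : K),
      Algebra.trace ℚ K ((p • Bd 0 + q • Bd 1) * x) =
        p * Bq.repr x 0 + q * Bq.repr x 1 := by
    intro p q x
    have hx : x = Bq.repr x 0 • Bq 0 + Bq.repr x 1 • Bq 1 := by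
      have h := Bq.sum_repr x
      rw [Fin.sum_univ_two] at h
      exact h.symm
    have hform : ∀ (i j : Fin 2),
        Algebra.trace ℚ K (Bd i * Bq j) = if j = i then 1 else 0 := by
      intro i j
      have := (Algebra.traceForm ℚ K).apply_dualBasis_left hnd Bq i j
      rwa [Algebra.traceForm_apply] at this
    nth_rewrite 1 [hx]
    simp only [add_mul, mul_add, smul_mul_assoc, mul_smul_comm, map_add, map_smul, hform,
      smul_eq_mul]
    norm_num
    ring
  have hrepr2 : ∀ (c d : ℚ) (i : Fin 2),
      Bq.repr ((c : ℚ) • Bq 0 + (d : ℚ) • Bq 1) i = if i = 0 then c else d := by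
    intro c d i
    rw [map_add, map_smul, map_smul]
    fin_cases i <;> simp [Module.Basis.repr_self, Finsupp.single_apply]
  have key2 : ∀ (p q c d : ℚ),
      Algebra.trace ℚ K ((p • Bd 0 + q • Bd 1) * (c • Bq 0 + d • Bq 1)) = p * c + q * d := by
    intro p q c d
    rw [key, hrepr2, hrepr2]
    norm_num
  -- ## Step 3: coordinates of α, coprimality
  obtain ⟨a, ha⟩ := hint α hαint 0
  obtain ⟨b, hb⟩ := hint α hαint 1
  have hαrepr : α = (a : ℚ) • Bq 0 + (b : ℚ) • Bq 1 := by
    have h := Bq.sum_repr α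
    rw [Fin.sum_univ_two, ha, hb] at h
    exact h.symm
  have hα1 : 0 < ψ1 α := hαpos ψ1
  have hα2 : 0 < ψ2 α := hαpos ψ2
  have hcop : IsCoprime a b := by
    rw [Int.isCoprime_iff_gcd_eq_one]
    by_contra hg
    set g : ℕ := Int.gcd a b with hgdef
    have hg0 : g ≠ 0 := by
      intro h0
      obtain ⟨h1, h2⟩ := Int.gcd_eq_zero_iff.mp h0
      rw [h1, h2] at hαrepr
      simp at hαrepr
      rw [hαrepr] at hα1
      simp at hα1
    have hg2 : 2 ≤ g := by omega
    obtain ⟨a', ha'⟩ : (g : ℤ) ∣ a := Int.gcd_dvd_left a b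
    obtain ⟨b', hb'⟩ : (g : ℤ) ∣ b := Int.gcd_dvd_right a b
    set ε : K := (a' : ℚ) • Bq 0 + (b' : ℚ) • Bq 1 with hε
    set ζ : K := (((g : ℤ) - 1) * a' : ℚ) • Bq 0 + (((g : ℤ) - 1) * b' : ℚ) • Bq 1 with hζ
    have hsum : α = ε + ζ := by
      rw [hαrepr, hε, hζ, ha', hb']
      push_cast
      module
    have hεint : IsIntegral ℤ ε := hcomb a' b'
    have hζint : IsIntegral ℤ ζ := by
      have := hcomb (((g : ℤ) - 1) * a') (((g : ℤ) - 1) * b')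
      push_cast at this ⊢
      exact this
    have hεpos : ∀ φ : K →+* ℝ, 0 < φ ε := by
      intro φ
      have hαε : α = (g : ℚ) • ε := by
        rw [hαrepr, hε, ha', hb']
        push_cast
        module
      have h1 : φ α = (g : ℝ) * φ ε := by
        rw [hαε, hφsmul]
        norm_num
      have h2 : 0 < φ α := hαpos φ
      nlinarith [h2, h1, show (0:ℝ) < (g:ℝ) by exact_mod_cast Nat.pos_of_ne_zero hg0]
    have hζφ : ∀ φ : K →+* ℝ, φ ζ = ((g : ℝ) - 1) * φ ε := by
      intro φ
      have : ζ = (((g : ℤ) - 1 : ℤ) : ℚ) • ε := by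
        rw [hζ, hε]
        push_cast
        module
      rw [this, hφsmul]
      push_cast
      ring
    have hζpos : ∀ φ : K →+* ℝ, 0 < φ ζ := by
      intro φ
      rw [hζφ φ]
      have := hεpos φ
      have hgR : (2 : ℝ) ≤ (g : ℝ) := by exact_mod_cast hg2
      nlinarith
    exact hind ⟨ε, ζ, hεint, hζint, hεpos, hζpos, hsum⟩
  obtain ⟨m0, n0, hbez⟩ := hcop
  -- hbez : m0 * a + n0 * b = 1
  have hbezq : (m0 : ℚ) * a + (n0 : ℚ) * b = 1 := by exact_mod_cast congrArg (Int.cast : ℤ → ℚ) hbez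
  -- ## Step 4: γ and the choice of σ1
  set γ : K := (b : ℚ) • Bd 0 + ((-a : ℤ) : ℚ) • Bd 1 with hγdef
  have hγα : Algebra.trace ℚ K (γ * α) = 0 := by
    rw [hγdef, hαrepr, key2]
    push_cast
    ring
  have hγne : γ ≠ 0 := by
    intro h0
    have h1 : Algebra.trace ℚ K (γ * Bq 0) = (b : ℚ) := by
      have := key (b : ℚ) ((-a : ℤ) : ℚ) (Bq 0)
      rw [← hγdef] at this
      rw [this]
      simp [Module.Basis.repr_self, Finsupp.single_apply]
    have h2 : Algebra.trace ℚ K (γ * Bq 1) = ((-a : ℤ) : ℚ) := by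
      have := key (b : ℚ) ((-a : ℤ) : ℚ) (Bq 1)
      rw [← hγdef] at this
      rw [this]
      simp [Module.Basis.repr_self, Finsupp.single_apply]
    rw [h0, zero_mul, map_zero] at h1 h2
    have hb0 : b = 0 := by exact_mod_cast h1.symm
    have ha0 : a = 0 := by
      have h3 : (-a : ℤ) = 0 := by exact_mod_cast h2.symm
      omega
    rw [ha0, hb0] at hbez
    simp at hbez
  have hγreal : ∀ φ : K →+* ℝ, ∀ x : K, φ (γ * x) = φ γ * φ x := fun φ x => map_mul φ γ x
  -- trace of γ * α in ℝ
  have hγαR : ψ1 γ * ψ1 α + ψ2 γ * ψ2 α = 0 := by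
    have := htrψ (γ * α)
    rw [hγα] at this
    simp only [map_mul] at this
    push_cast at this
    linarith [this.symm]
  obtain ⟨σ1, σ2, hall, htr, hγ1⟩ :
      ∃ σ1 σ2 : K →+* ℝ, (∀ φ : K →+* ℝ, φ = σ1 ∨ φ = σ2) ∧
        (∀ x : K, ((Algebra.trace ℚ K x : ℚ) : ℝ) = σ1 x + σ2 x) ∧ 0 < σ1 γ := by
    rcases lt_trichotomy 0 (ψ1 γ) with h | h | h
    · exact ⟨ψ1, ψ2, hallψ, htrψ, h⟩
    · exfalso
      have : γ = 0 := by
        have := ψ1.injective (a₁ := γ) (a₂ := 0)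
        simp only [map_zero] at this
        exact this h.symm
      exact hγne this
    · refine ⟨ψ2, ψ1, fun φ => (hallψ φ).symm, fun x => by rw [htrψ x]; ring, ?_⟩
      nlinarith [hγαR, hα1, hα2, h]
  have hσ1α : 0 < σ1 α := hαpos σ1
  have hσ2α : 0 < σ2 α := hαpos σ2
  -- ## Step 5: the family δ t and by_contra
  set D : ℤ → K := fun t =>
    ((m0 + t * b : ℤ) : ℚ) • Bd 0 + ((n0 - t * a : ℤ) : ℚ) • Bd 1 with hD
  have hDα : ∀ t : ℤ, Algebra.trace ℚ K (D t * α) = 1 := by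
    intro t
    simp only [hD]
    rw [hαrepr, key2]
    push_cast
    linear_combination hbezq
  have hDint : ∀ (t : ℤ) (β : K), IsIntegral ℤ β →
      ∃ c : ℤ, Algebra.trace ℚ K (D t * β) = (c : ℚ) := by
    intro t β hβ
    obtain ⟨c1, hc1⟩ := hint β hβ 0
    obtain ⟨c2, hc2⟩ := hint β hβ 1
    refine ⟨(m0 + t * b) * c1 + (n0 - t * a) * c2, ?_⟩
    simp only [hD]
    rw [key, hc1, hc2]
    push_cast
    ring
  have hDne : ∀ t : ℤ, D t ≠ 0 := by
    intro t h0
    have := hDα t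
    rw [h0, zero_mul, map_zero] at this
    exact absurd this (by norm_num)
  have hDlin : ∀ (φ : K →+* ℝ) (t : ℤ), φ (D t) = φ (D 0) + (t : ℝ) * φ γ := by
    intro φ t
    have hDt : D t = D 0 + (t : ℚ) • γ := by
      rw [hD, hγdef]
      simp only []
      push_cast
      module
    rw [hDt, map_add, hφsmul]
    push_cast
    ring
  have hDαR : ∀ t : ℤ, σ1 (D t) * σ1 α + σ2 (D t) * σ2 α = 1 := by
    intro t
    have := htr (D t * α)
    rw [hDα t] at this
    simp only [map_mul] at this
    push_cast at this
    linarith [this.symm]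
  by_contra hcon
  have hfail : ∀ t : ℤ, σ1 (D t) < 0 ∨ σ2 (D t) < 0 := by
    intro t
    by_contra hnot
    push_neg at hnot
    obtain ⟨h1, h2⟩ := hnot
    have hne1 : σ1 (D t) ≠ 0 := fun h => hDne t (σ1.injective (by rw [h, map_zero]))
    have hne2 : σ2 (D t) ≠ 0 := fun h => hDne t (σ2.injective (by rw [h, map_zero]))
    refine hcon ⟨D t, hDint t, ?_, by rw [mul_comm]; exact hDα t⟩
    intro φ
    rcases hall φ with h | h <;> rw [h]
    · exact lt_of_le_of_ne h1 (Ne.symm hne1)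
    · exact lt_of_le_of_ne h2 (Ne.symm hne2)
  -- ## Step 6: the crossing index
  set c : ℝ := σ1 γ with hc
  set A : ℝ := σ1 (D 0) with hA
  set r : ℝ := -A / c with hr
  set N : ℤ := ⌊r⌋ with hN
  have hp : ∀ t : ℤ, σ1 (D t) = A + t * c := fun t => hDlin σ1 t
  have hrc : A + r * c = 0 := by
    rw [hr]
    field_simp [ne_of_gt hγ1]
    ring
  have hNlt : (N : ℝ) < r := by
    rcases lt_or_eq_of_le (Int.floor_le r) with h | h
    · exact h
    · exfalso
      have h1 : σ1 (D N) = 0 := by rw [hp N, h, hrc]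
      exact hDne N (σ1.injective (by rw [h1, map_zero]))
  have hu1 : σ1 (D N) < 0 := by
    rw [hp N]
    nlinarith [hNlt, hγ1, hrc]
  have hv1 : 0 < σ1 (D (N + 1)) := by
    rw [hp (N + 1)]
    have := Int.lt_floor_add_one r
    push_cast
    nlinarith [this, hγ1, hrc]
  have hu2 : 0 < σ2 (D N) := by
    nlinarith [hDαR N, hu1, hσ1α, hσ2α]
  have hv2 : σ2 (D (N + 1)) < 0 := by
    rcases hfail (N + 1) with h | h
    · linarith
    · exact h
  -- ## Step 7: the decomposition
  set m : ℤ := m0 + N * b with hm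
  set n : ℤ := n0 - N * a with hn
  have hamn : a * m + b * n = 1 := by
    rw [hm, hn]
    linear_combination hbez
  set u : K := D N with hu
  set v : K := D (N + 1) with hv
  have hucoord : u = ((m : ℤ) : ℚ) • Bd 0 + ((n : ℤ) : ℚ) • Bd 1 := by
    rw [hu, hm, hn]
  have hvcoord : v = ((m + b : ℤ) : ℚ) • Bd 0 + ((n - a : ℤ) : ℚ) • Bd 1 := by
    rw [hv, hm, hn]
    simp only [hD]
    push_cast
    module
  set B : K := ((a - n : ℤ) : ℚ) • Bq 0 + ((m + b : ℤ) : ℚ) • Bq 1 with hB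
  set G : K := ((n : ℤ) : ℚ) • Bq 0 + ((-m : ℤ) : ℚ) • Bq 1 with hG
  have hBint : IsIntegral ℤ B := hcomb _ _
  have hGint : IsIntegral ℤ G := hcomb _ _
  have hsumBG : α = B + G := by
    rw [hαrepr, hB, hG]
    push_cast
    module
  -- trace identities over ℚ
  have hamnq : (a : ℚ) * m + (b : ℚ) * n = 1 := by exact_mod_cast congrArg (Int.cast : ℤ → ℚ) hamn
  have htuB : Algebra.trace ℚ K (u * B) = 1 := by
    rw [hucoord, hB, key2]
    push_cast
    linear_combination hamnq
  have htvB : Algebra.trace ℚ K (v * B) = 0 := by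
    rw [hvcoord, hB, key2]
    push_cast
    ring
  have htuG : Algebra.trace ℚ K (u * G) = 0 := by
    rw [hucoord, hG, key2]
    push_cast
    ring
  have htvG : Algebra.trace ℚ K (v * G) = 1 := by
    rw [hvcoord, hG, key2]
    push_cast
    linear_combination hamnq
  -- real versions
  have hreal : ∀ (w x : K) (q : ℚ), Algebra.trace ℚ K (w * x) = q →
      σ1 w * σ1 x + σ2 w * σ2 x = (q : ℝ) := by
    intro w x q hq
    have := htr (w * x)
    rw [hq] at this
    simp only [map_mul] at this
    linarith [this.symm]
  have RuB := hreal u B 1 htuB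
  have RvB := hreal v B 0 htvB
  have RuG := hreal u G 0 htuG
  have RvG := hreal v G 1 htvG
  have Ruα : σ1 u * σ1 α + σ2 u * σ2 α = 1 := by
    have := hDαR N; rw [← hu] at this; exact this
  have Rvα : σ1 v * σ1 α + σ2 v * σ2 α = 1 := by
    have := hDαR (N + 1); rw [← hv] at this; exact this
  push_cast at RuB RvB RuG RvG
  -- sign facts for u, v
  have su1 : σ1 u < 0 := hu1
  have su2 : 0 < σ2 u := hu2
  have sv1 : 0 < σ1 v := hv1
  have sv2 : σ2 v < 0 := hv2
  -- determinant
  have hdet5 : (σ1 u * σ2 v - σ2 u * σ1 v) * σ1 α = σ2 v - σ2 u := by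
    linear_combination σ2 v * Ruα - σ2 u * Rvα
  have hdet : σ1 u * σ2 v - σ2 u * σ1 v < 0 := by nlinarith [hdet5, hσ1α, sv2, su2]
  -- positivity of B
  have hdB1 : σ1 B * (σ1 u * σ2 v - σ2 u * σ1 v) = σ2 v := by
    linear_combination σ2 v * RuB - σ2 u * RvB
  have hB1 : 0 < σ1 B := by nlinarith [hdB1, hdet, sv2]
  have hdB2 : σ2 B * (σ1 u * σ2 v - σ2 u * σ1 v) = -σ1 v := by
    linear_combination σ1 u * RvB - σ1 v * RuB
  have hB2 : 0 < σ2 B := by nlinarith [hdB2, hdet, sv1]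
  -- positivity of G
  have hdG1 : σ1 G * (σ1 u * σ2 v - σ2 u * σ1 v) = -σ2 u := by
    linear_combination σ2 v * RuG - σ2 u * RvG
  have hG1 : 0 < σ1 G := by nlinarith [hdG1, hdet, su2]
  have hdG2 : σ2 G * (σ1 u * σ2 v - σ2 u * σ1 v) = σ1 u := by
    linear_combination σ1 u * RvG - σ1 v * RuG
  have hG2 : 0 < σ2 G := by nlinarith [hdG2, hdet, su1]
  exact hind ⟨B, G, hBint, hGint,
    fun φ => by rcases hall φ with h | h <;> rw [h] <;> assumption,
    fun φ => by rcases hall φ with h | h <;> rw [h] <;> assumption,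
    hsumBG⟩
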